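/- Let X be a measurable space equipped with a sigma-finite measure lambda, V : X -> [1,infinity) measurable, q a bounded positive proposal density, and let mu, nu be probability measures with everywhere positive bounded densities with respect to lambda satisfying ∫ V dmu < infinity and ∫ V dnu < infinity. Let rho be a probability measure with density such that sup_x rho(x)/mu(x)^2 < infinity and sup_x rho(x)/nu(x)^2 < infinity. Then, with P_mu, P_nu the Metropolis-Hastings kernels with invariant distributions mu, nu (the Hastings kernels with balancing function g(u) = min(1,u)): sup over measurable f with ||f||_V <= 1 of |P_mu(rho,f) - P_nu(rho,f)| is at most M_rho * ||mu - nu||_V, where M_rho := ∫_0^1 { ∫ sup_y [ (V(y)+V(z)) (rho(z)/mu_t(z)) q(y,z) / V(y) ] lambda(dz) + ∫ sup_y [ (V(y)+V(z)) mu_t(z) q(z,y) rho(y) / (mu_t(y)^2 V(y)) ] lambda(dz) } dt. -/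

import Mathlib

open MeasureTheory ProbabilityTheory ENNReal
open scoped NNReal

/-- The Hastings ratio `r_μ(x,y) = μ(y)q(y,x) / (μ(x)q(x,y))` for a target density `p`. -/
noncomputable def hastingsRatio {X : Type*} (q : X → X → ℝ) (p : X → ℝ) (x y : X) : ℝ :=
  p y * q y x / (p x * q x y)

/-- The Metropolis–Hastings kernel (Hastings kernel with balancing function
`g(u) = min 1 u`), with proposal density `q` and invariant density `p`. -/
noncomputable def mhKernelFun {X : Type*} [MeasurableSpace X] (lam : Measure X)
    (q : X → X → ℝ) (p : X → ℝ) (x : X) (f : X → ℝ) : ℝ :=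
  (∫ y, f y * min 1 (hastingsRatio q p x y) * q x y ∂lam)
    + f x * (1 - ∫ y, min 1 (hastingsRatio q p x y) * q x y ∂lam)

/-- The `V`-norm `‖μ - ν‖_V = sup { |∫ f dμ - ∫ f dν| : f measurable, ‖f‖_V ≤ 1 }`. -/
noncomputable def vDistE {X : Type*} [MeasurableSpace X] (V : X → ℝ) (μ ν : Measure X) :
    ℝ≥0∞ :=
  ⨆ f : {f : X → ℝ // Measurable f ∧ ∀ x, |f x| ≤ V x},
    ENNReal.ofReal |(∫ x, f.1 x ∂μ) - ∫ x, f.1 x ∂ν|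


section mhAux
open MeasureTheory ENNReal

/-! ### Auxiliary lemmas -/

lemma mh_key_ftc (pa pb qa qb : ℝ) (hpa : 0 < pa) (hqa : 0 < qa) (hpb : 0 ≤ pb) (hqb : 0 ≤ qb) :
    |qb / qa - pb / pa| ≤ ∫ t in Set.Ioc (0:ℝ) 1,
      (|qb - pb| / ((1-t)*pa + t*qa)
        + ((1-t)*pb + t*qb) * |qa - pa| / ((1-t)*pa + t*qa)^2) := by
  set B : ℝ → ℝ := fun t => (1-t)*pa + t*qa with hBdef
  set A : ℝ → ℝ := fun t => (1-t)*pb + t*qb with hAdef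
  set D : ℝ → ℝ := fun t => ((qb - pb) * B t - A t * (qa - pa)) / (B t)^2 with hDdef
  set g : ℝ → ℝ := fun t => |qb - pb| / B t + A t * |qa - pa| / (B t)^2 with hgdef
  have hBpos : ∀ t ∈ Set.Icc (0:ℝ) 1, 0 < B t := by
    intro t ht
    rcases lt_or_eq_of_le ht.2 with h | h
    · have h1 : 0 < (1-t)*pa := mul_pos (by linarith) hpa
      have h2 : 0 ≤ t*qa := mul_nonneg ht.1 hqa.le
      simp only [hBdef]; linarith
    · simp only [hBdef, h]; norm_num; exact hqa
  have hAnn : ∀ t ∈ Set.Icc (0:ℝ) 1, 0 ≤ A t := fun t ht =>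
    add_nonneg (mul_nonneg (by linarith [ht.2]) hpb) (mul_nonneg ht.1 hqb)
  have huIcc : Set.uIcc (0:ℝ) 1 = Set.Icc 0 1 := Set.uIcc_of_le zero_le_one
  have hderiv : ∀ t ∈ Set.uIcc (0:ℝ) 1, HasDerivAt (fun u => A u / B u) (D t) t := by
    intro t ht
    rw [huIcc] at ht
    have hA : HasDerivAt A (qb - pb) t := by
      have h1 : HasDerivAt (fun u : ℝ => (1-u)*pb) (-pb) t := by
        simpa using (((hasDerivAt_id t).const_sub 1).mul_const pb)
      have h2 : HasDerivAt (fun u : ℝ => u*qb) qb t := by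
        simpa using (hasDerivAt_id t).mul_const qb
      have h3 := h1.add h2
      exact h3.congr_deriv (by ring)
    have hB : HasDerivAt B (qa - pa) t := by
      have h1 : HasDerivAt (fun u : ℝ => (1-u)*pa) (-pa) t := by
        simpa using (((hasDerivAt_id t).const_sub 1).mul_const pa)
      have h2 : HasDerivAt (fun u : ℝ => u*qa) qa t := by
        simpa using (hasDerivAt_id t).mul_const qa
      have h3 := h1.add h2
      exact h3.congr_deriv (by ring)
    exact hA.div hB (hBpos t ht).ne'
  have hDcont : ContinuousOn D (Set.Icc 0 1) := by
    apply ContinuousOn.div (by fun_prop) (by fun_prop)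
    intro t ht; exact pow_ne_zero 2 (hBpos t ht).ne'
  have hDint : IntervalIntegrable D volume 0 1 := by
    apply ContinuousOn.intervalIntegrable; rwa [huIcc]
  have hftc : ∫ t in (0:ℝ)..1, D t = qb/qa - pb/pa := by
    rw [intervalIntegral.integral_eq_sub_of_hasDerivAt hderiv hDint]
    simp only [hAdef, hBdef]; norm_num
  have hgcont : ContinuousOn g (Set.Icc 0 1) := by
    apply ContinuousOn.add
    · exact ContinuousOn.div (by fun_prop) (by fun_prop)
        (fun t ht => (hBpos t ht).ne')
    · exact ContinuousOn.div (by fun_prop) (by fun_prop)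
        (fun t ht => pow_ne_zero 2 (hBpos t ht).ne')
  have hgint : IntegrableOn g (Set.Ioc 0 1) volume :=
    (hgcont.integrableOn_compact isCompact_Icc).mono_set Set.Ioc_subset_Icc_self
  have habs : ∀ t ∈ Set.Ioc (0:ℝ) 1, |D t| ≤ g t := by
    intro t ht
    have ht' : t ∈ Set.Icc (0:ℝ) 1 := Set.Ioc_subset_Icc_self ht
    have hB := hBpos t ht'
    have hA := hAnn t ht'
    have h1 : |((qb - pb) * B t - A t * (qa - pa))| ≤ |qb - pb| * B t + A t * |qa - pa| := by
      calc |((qb - pb) * B t - A t * (qa - pa))|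
          ≤ |(qb - pb) * B t| + |A t * (qa - pa)| := abs_sub _ _
        _ = |qb - pb| * B t + A t * |qa - pa| := by
            rw [abs_mul, abs_mul, abs_of_pos hB, abs_of_nonneg hA]
    calc |D t| = |((qb - pb) * B t - A t * (qa - pa))| / (B t)^2 := by
          rw [hDdef]; rw [abs_div, abs_of_pos (pow_pos hB 2)]
      _ ≤ (|qb - pb| * B t + A t * |qa - pa|) / (B t)^2 := by gcongr
      _ = g t := by rw [hgdef]; field_simp
  have : |qb/qa - pb/pa| = |∫ t in Set.Ioc (0:ℝ) 1, D t| := by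
    rw [← intervalIntegral.integral_of_le zero_le_one, hftc]
  rw [this]
  have hn := norm_integral_le_of_norm_le (μ := volume.restrict (Set.Ioc (0:ℝ) 1))
      (f := D) (g := g) hgint
      (((ae_restrict_mem measurableSet_Ioc).mono (fun t ht => by
        rw [Real.norm_eq_abs]; exact habs t ht)))
  rw [Real.norm_eq_abs] at hn
  exact hn.trans (le_of_eq (by rfl))

lemma mh_key_ofReal (C pa pb qa qb : ℝ) (hC : 0 ≤ C) (hpa : 0 < pa) (hqa : 0 < qa)
    (hpb : 0 ≤ pb) (hqb : 0 ≤ qb) :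
    ENNReal.ofReal (C * |qb / qa - pb / pa|) ≤ ∫⁻ t in Set.Icc (0:ℝ) 1,
      ENNReal.ofReal (C * (|qb - pb| / ((1-t)*pa + t*qa)
        + ((1-t)*pb + t*qb) * |qa - pa| / ((1-t)*pa + t*qa)^2)) := by
  have hftc := mh_key_ftc pa pb qa qb hpa hqa hpb hqb
  set g : ℝ → ℝ := fun t => |qb - pb| / ((1-t)*pa + t*qa)
        + ((1-t)*pb + t*qb) * |qa - pa| / ((1-t)*pa + t*qa)^2 with hgdef
  have hBpos : ∀ t ∈ Set.Icc (0:ℝ) 1, 0 < (1-t)*pa + t*qa := by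
    intro t ht
    rcases lt_or_eq_of_le ht.2 with h | h
    · have h1 : 0 < (1-t)*pa := mul_pos (by linarith) hpa
      have h2 : 0 ≤ t*qa := mul_nonneg ht.1 hqa.le
      linarith
    · simp only [h]; norm_num; exact hqa
  have hg0' : ∀ t ∈ Set.Icc (0:ℝ) 1, 0 ≤ g t := by
    intro t ht
    have hB := hBpos t ht
    have hA : 0 ≤ (1-t)*pb + t*qb :=
      add_nonneg (mul_nonneg (by linarith [ht.2]) hpb) (mul_nonneg ht.1 hqb)
    exact add_nonneg (div_nonneg (abs_nonneg _) hB.le)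
      (div_nonneg (mul_nonneg hA (abs_nonneg _)) (pow_pos hB 2).le)
  have hg0 : 0 ≤ᵐ[volume.restrict (Set.Ioc (0:ℝ) 1)] g :=
    (ae_restrict_mem measurableSet_Ioc).mono fun t ht =>
      hg0' t (Set.Ioc_subset_Icc_self ht)
  have hgcont : ContinuousOn g (Set.Icc 0 1) := by
    apply ContinuousOn.add
    · exact ContinuousOn.div (by fun_prop) (by fun_prop) (fun t ht => (hBpos t ht).ne')
    · exact ContinuousOn.div (by fun_prop) (by fun_prop)
        (fun t ht => pow_ne_zero 2 (hBpos t ht).ne')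
  have hgint : IntegrableOn g (Set.Ioc 0 1) volume :=
    (hgcont.integrableOn_compact isCompact_Icc).mono_set Set.Ioc_subset_Icc_self
  calc ENNReal.ofReal (C * |qb / qa - pb / pa|)
      ≤ ENNReal.ofReal (C * ∫ t in Set.Ioc (0:ℝ) 1, g t) :=
        ofReal_le_ofReal (mul_le_mul_of_nonneg_left hftc hC)
    _ = ENNReal.ofReal C * ENNReal.ofReal (∫ t in Set.Ioc (0:ℝ) 1, g t) := ofReal_mul hC
    _ = ENNReal.ofReal C * ∫⁻ t in Set.Ioc (0:ℝ) 1, ENNReal.ofReal (g t) := by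
        rw [ofReal_integral_eq_lintegral_ofReal hgint hg0]
    _ = ∫⁻ t in Set.Ioc (0:ℝ) 1, ENNReal.ofReal C * ENNReal.ofReal (g t) :=
        (lintegral_const_mul' _ _ ofReal_ne_top).symm
    _ = ∫⁻ t in Set.Ioc (0:ℝ) 1, ENNReal.ofReal (C * g t) := by
        simp_rw [← ofReal_mul hC]
    _ ≤ ∫⁻ t in Set.Icc (0:ℝ) 1, ENNReal.ofReal (C * g t) :=
        lintegral_mono_set Set.Ioc_subset_Icc_self

lemma mh_fixed_t {X : Type*} [MeasurableSpace X] (lam : Measure X)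
    (V : X → ℝ) (hV1 : ∀ x, 1 ≤ V x)
    (q : X → X → ℝ) (pμ pν pρ : X → ℝ)
    (hw : Measurable (fun z => ENNReal.ofReal (V z * |pν z - pμ z|)))
    (hc : (∫⁻ z, ENNReal.ofReal (V z * |pν z - pμ z|) ∂lam) ≠ ⊤)
    (t : ℝ) (ht : t ∈ Set.Icc (0:ℝ) 1)
    (hμ0 : ∀ z, 0 ≤ pμ z) (hν0 : ∀ z, 0 ≤ pν z)
    (hqnn : ∀ x y, 0 ≤ q x y) (hρ0 : ∀ x, 0 ≤ pρ x) :
    ∫⁻ x, ∫⁻ y, ENNReal.ofReal (pρ x * ((V x + V y) * q y x) *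
        (|pν y - pμ y| / ((1-t)*pμ x + t*pν x)
          + ((1-t)*pμ y + t*pν y) * |pν x - pμ x| / ((1-t)*pμ x + t*pν x)^2)) ∂lam ∂lam
      ≤ ((∫⁻ z, ⨆ y, ENNReal.ofReal
            ((V y + V z) * (pρ z / ((1 - t) * pμ z + t * pν z)) * q y z / V y) ∂lam)
        + ∫⁻ z, ⨆ y, ENNReal.ofReal
            ((V y + V z) * ((1 - t) * pμ z + t * pν z) * q z y * pρ y /
              (((1 - t) * pμ y + t * pν y) ^ 2 * V y)) ∂lam)
        * ∫⁻ z, ENNReal.ofReal (V z * |pν z - pμ z|) ∂lam := by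
  set w : X → ℝ≥0∞ := fun z => ENNReal.ofReal (V z * |pν z - pμ z|) with hwdef
  set P : X → ℝ := fun z => (1-t)*pμ z + t*pν z with hPdef
  have hPnn : ∀ z, 0 ≤ P z := fun z =>
    add_nonneg (mul_nonneg (by linarith [ht.2]) (hμ0 z)) (mul_nonneg ht.1 (hν0 z))
  have hVpos : ∀ z, 0 < V z := fun z => lt_of_lt_of_le one_pos (hV1 z)
  set S1 : X → ℝ≥0∞ := fun z => ⨆ y, ENNReal.ofReal
      ((V y + V z) * (pρ z / ((1 - t) * pμ z + t * pν z)) * q y z / V y) with hS1def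
  set S2 : X → ℝ≥0∞ := fun z => ⨆ y, ENNReal.ofReal
      ((V y + V z) * ((1 - t) * pμ z + t * pν z) * q z y * pρ y /
        (((1 - t) * pμ y + t * pν y) ^ 2 * V y)) with hS2def
  have key : ∀ x y, ENNReal.ofReal (pρ x * ((V x + V y) * q y x) *
        (|pν y - pμ y| / P x + P y * |pν x - pμ x| / (P x)^2))
      ≤ S1 x * w y + w x * S2 y := by
    intro x y
    have hCnn : 0 ≤ pρ x * ((V x + V y) * q y x) :=
      mul_nonneg (hρ0 x) (mul_nonneg (by linarith [hVpos x, hVpos y]) (hqnn y x))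
    have hg1 : 0 ≤ |pν y - pμ y| / P x := div_nonneg (abs_nonneg _) (hPnn x)
    have hg2 : 0 ≤ P y * |pν x - pμ x| / (P x)^2 :=
      div_nonneg (mul_nonneg (hPnn y) (abs_nonneg _)) (sq_nonneg _)
    rw [mul_add, ofReal_add (mul_nonneg hCnn hg1) (mul_nonneg hCnn hg2)]
    have cancel : ∀ (a b v : ℝ), v ≠ 0 → a / v * (v * b) = a * b := by
      intro a b v hv
      calc a / v * (v * b) = a * b * (v / v) := by ring
        _ = a * b := by rw [div_self hv, mul_one]
    have e1 : pρ x * ((V x + V y) * q y x) * (|pν y - pμ y| / P x)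
        = ((V y + V x) * (pρ x / P x) * q y x / V y) * (V y * |pν y - pμ y|) := by
      rw [cancel _ _ _ (hVpos y).ne']
      ring
    have e2 : pρ x * ((V x + V y) * q y x) * (P y * |pν x - pμ x| / (P x)^2)
        = (V x * |pν x - pμ x|) *
          ((V x + V y) * P y * q y x * pρ x / ((P x)^2 * V x)) := by
      rw [mul_comm (V x * |pν x - pμ x|) _, ← div_div, cancel _ _ _ (hVpos x).ne']
      ring
    apply add_le_add
    · rw [e1, ofReal_mul' (mul_nonneg (hVpos y).le (abs_nonneg _))]
      apply mul_le_mul_left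
      exact le_iSup (fun y' => ENNReal.ofReal
        ((V y' + V x) * (pρ x / ((1 - t) * pμ x + t * pν x)) * q y' x / V y')) y
    · rw [e2, ofReal_mul (mul_nonneg (hVpos x).le (abs_nonneg _))]
      apply mul_le_mul_right
      exact le_iSup (fun x' => ENNReal.ofReal
        ((V x' + V y) * ((1 - t) * pμ y + t * pν y) * q y x' * pρ x' /
          (((1 - t) * pμ x' + t * pν x') ^ 2 * V x'))) x
  calc ∫⁻ x, ∫⁻ y, ENNReal.ofReal (pρ x * ((V x + V y) * q y x) *
        (|pν y - pμ y| / ((1-t)*pμ x + t*pν x)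
          + ((1-t)*pμ y + t*pν y) * |pν x - pμ x| / ((1-t)*pμ x + t*pν x)^2)) ∂lam ∂lam
      ≤ ∫⁻ x, ∫⁻ y, (S1 x * w y + w x * S2 y) ∂lam ∂lam := by
        exact lintegral_mono fun x => lintegral_mono fun y => key x y
    _ = ∫⁻ x, (S1 x * (∫⁻ z, w z ∂lam) + w x * ∫⁻ z, S2 z ∂lam) ∂lam := by
        apply lintegral_congr fun x => ?_
        rw [lintegral_add_left (hw.const_mul _)]
        rw [lintegral_const_mul _ hw, lintegral_const_mul' _ _ ofReal_ne_top]
    _ = ∫⁻ x, (w x * ∫⁻ z, S2 z ∂lam) ∂lam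
          + ∫⁻ x, S1 x * (∫⁻ z, w z ∂lam) ∂lam := by
        simp_rw [add_comm (S1 _ * _)]
        rw [lintegral_add_left (hw.mul_const _)]
    _ = (∫⁻ z, w z ∂lam) * (∫⁻ z, S2 z ∂lam)
          + (∫⁻ z, S1 z ∂lam) * (∫⁻ z, w z ∂lam) := by
        rw [lintegral_mul_const _ hw, lintegral_mul_const' _ _ hc]
    _ = ((∫⁻ z, S1 z ∂lam) + ∫⁻ z, S2 z ∂lam) * ∫⁻ z, w z ∂lam := by ring

section mhHelpers
variable {X : Type*} [MeasurableSpace X] (lam : Measure X) [SigmaFinite lam]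
  {V f : X → ℝ} {q : X → X → ℝ} {p : X → ℝ} {cq : ℝ}

omit [SigmaFinite lam] in
lemma mh_q_integrable (q : X → X → ℝ) (hqint : ∀ x, ∫ y, q x y ∂lam = 1)
    (x : X) : Integrable (fun y => q x y) lam := by
  by_contra h
  have h2 := hqint x
  rw [integral_undef h] at h2
  exact one_ne_zero h2.symm

omit [SigmaFinite lam] in
lemma mh_repr (f : X → ℝ) (q : X → X → ℝ) (p : X → ℝ)
    (hqpos : ∀ x y, 0 < q x y) (x : X) :
    mhKernelFun lam q p x f = (∫ y, f y * min (q x y) (p y * q y x / p x) ∂lam)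
      + f x * (1 - ∫ y, min (q x y) (p y * q y x / p x) ∂lam) := by
  have hmin : ∀ y, min 1 (hastingsRatio q p x y) * q x y
      = min (q x y) (p y * q y x / p x) := by
    intro y
    rw [hastingsRatio, min_mul_of_nonneg _ _ (hqpos x y).le, one_mul]
    congr 1
    calc p y * q y x / (p x * q x y) * q x y
        = p y * q y x * (q x y / q x y) / p x := by ring
      _ = p y * q y x / p x := by rw [div_self (hqpos x y).ne', mul_one]
  unfold mhKernelFun
  simp_rw [mul_assoc, hmin]

omit [SigmaFinite lam] in
lemma mh_a_meas_pair (hqm : Measurable (Function.uncurry q)) (hpm : Measurable p) :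
    Measurable (fun xy : X × X => min (q xy.1 xy.2) (p xy.2 * q xy.2 xy.1 / p xy.1)) := by
  have h1 : Measurable fun xy : X × X => q xy.1 xy.2 := hqm
  have h2 : Measurable fun xy : X × X => q xy.2 xy.1 := hqm.comp measurable_swap
  exact h1.min (((hpm.comp measurable_snd).mul h2).div (hpm.comp measurable_fst))

omit [SigmaFinite lam] in
lemma mh_a_meas (hqm : Measurable (Function.uncurry q)) (hpm : Measurable p) (x : X) :
    Measurable (fun y => min (q x y) (p y * q y x / p x)) :=
  (mh_a_meas_pair hqm hpm).comp measurable_prodMk_left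

variable (hVm : Measurable V) (hV1 : ∀ x, 1 ≤ V x) (hfm : Measurable f)
  (hf : ∀ x, |f x| ≤ V x) (hqm : Measurable (Function.uncurry q))
  (hqpos : ∀ x y, 0 < q x y) (hcq : ∀ x y, q x y ≤ cq)
  (hqint : ∀ x, ∫ y, q x y ∂lam = 1) (hpm : Measurable p) (hppos : ∀ z, 0 < p z)
  (hVp : Integrable (fun z => V z * p z) lam)

omit [SigmaFinite lam] in
include hqm hqpos hqint hpm hppos in
lemma mh_a_int (x : X) : Integrable (fun y => min (q x y) (p y * q y x / p x)) lam := by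
  apply (mh_q_integrable lam q hqint x).mono' ((mh_a_meas hqm hpm x).aestronglyMeasurable)
  refine Filter.Eventually.of_forall fun y => ?_
  rw [Real.norm_eq_abs, abs_of_nonneg (le_min (hqpos x y).le
    (div_nonneg (mul_nonneg (hppos y).le (hqpos y x).le) (hppos x).le))]
  exact min_le_left _ _

omit [SigmaFinite lam] in
lemma mh_Va_le (hV1 : ∀ x, 1 ≤ V x) (hqpos : ∀ x y, 0 < q x y)
    (hcq : ∀ x y, q x y ≤ cq) (hppos : ∀ z, 0 < p z) (x y : X) :
    V y * min (q x y) (p y * q y x / p x) ≤ cq / p x * (V y * p y) := by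
  have hVy : 0 ≤ V y := le_trans zero_le_one (hV1 y)
  have hann : 0 ≤ min (q x y) (p y * q y x / p x) := le_min (hqpos x y).le
    (div_nonneg (mul_nonneg (hppos y).le (hqpos y x).le) (hppos x).le)
  calc V y * min (q x y) (p y * q y x / p x)
      ≤ V y * (p y * q y x / p x) :=
        mul_le_mul_of_nonneg_left (min_le_right _ _) hVy
    _ = V y * p y * q y x / p x := by ring
    _ ≤ cq * (V y * p y) / p x := by
        have hnum : V y * p y * q y x ≤ cq * (V y * p y) := by
          nlinarith [mul_nonneg hVy (hppos y).le, hcq y x, hqpos y x]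
        gcongr
        exact (hppos x).le
    _ = cq / p x * (V y * p y) := by ring

omit [SigmaFinite lam] in
include hV1 hfm hf hqm hqpos hcq hpm hppos hVp in
lemma mh_fa_int (x : X) : Integrable (fun y => f y * min (q x y) (p y * q y x / p x)) lam := by
  apply ((hVp.const_mul (cq / p x)).mono'
    ((hfm.mul (mh_a_meas hqm hpm x)).aestronglyMeasurable))
  refine Filter.Eventually.of_forall fun y => ?_
  have hann : 0 ≤ min (q x y) (p y * q y x / p x) := le_min (hqpos x y).le
    (div_nonneg (mul_nonneg (hppos y).le (hqpos y x).le) (hppos x).le)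
  have hVy : 0 ≤ V y := le_trans zero_le_one (hV1 y)
  simp only [Pi.mul_apply]
  rw [Real.norm_eq_abs, abs_mul, abs_of_nonneg hann]
  calc |f y| * min (q x y) (p y * q y x / p x)
      ≤ V y * min (q x y) (p y * q y x / p x) :=
        mul_le_mul_of_nonneg_right (hf y) hann
    _ ≤ cq / p x * (V y * p y) := mh_Va_le hV1 hqpos hcq hppos x y

include hfm hqm hpm in
lemma mh_meas : Measurable (fun x => mhKernelFun lam q p x f) := by
  have hr : Measurable (fun xy : X × X => min 1 (hastingsRatio q p xy.1 xy.2) * q xy.1 xy.2) := by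
    have h2 : Measurable fun xy : X × X => q xy.2 xy.1 := hqm.comp measurable_swap
    unfold hastingsRatio
    exact (measurable_const.min (((hpm.comp measurable_snd).mul h2).div
      ((hpm.comp measurable_fst).mul hqm))).mul hqm
  have h1 : Measurable (fun x => ∫ y, f y * (min 1 (hastingsRatio q p x y) * q x y) ∂lam) := by
    apply (StronglyMeasurable.integral_prod_right'
      (f := fun xy : X × X => f xy.2 * (min 1 (hastingsRatio q p xy.1 xy.2) * q xy.1 xy.2))
      ((hfm.comp measurable_snd).mul hr).stronglyMeasurable).measurable
  have h2 : Measurable (fun x => ∫ y, min 1 (hastingsRatio q p x y) * q x y ∂lam) := by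
    apply (StronglyMeasurable.integral_prod_right'
      (f := fun xy : X × X => min 1 (hastingsRatio q p xy.1 xy.2) * q xy.1 xy.2)
      hr.stronglyMeasurable).measurable
  unfold mhKernelFun
  simp_rw [mul_assoc]
  exact h1.add (hfm.mul ((measurable_const.sub h2)))

include hV1 hfm hf hqm hqpos hcq hqint hpm hppos hVp in
lemma mh_abs_le (x : X) :
    |mhKernelFun lam q p x f| ≤ cq * (∫ z, V z * p z ∂lam) / p x + V x := by
  rw [mh_repr lam f q p hqpos x]
  have hann : ∀ y, 0 ≤ min (q x y) (p y * q y x / p x) := fun y => le_min (hqpos x y).le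
    (div_nonneg (mul_nonneg (hppos y).le (hqpos y x).le) (hppos x).le)
  have hintle : ∫ y, min (q x y) (p y * q y x / p x) ∂lam ≤ 1 := by
    rw [← hqint x]
    exact integral_mono (mh_a_int lam hqm hqpos hqint hpm hppos x)
      (mh_q_integrable lam q hqint x) (fun y => min_le_left _ _)
  have hint0 : 0 ≤ ∫ y, min (q x y) (p y * q y x / p x) ∂lam :=
    integral_nonneg hann
  have h1 : |∫ y, f y * min (q x y) (p y * q y x / p x) ∂lam|
      ≤ cq * (∫ z, V z * p z ∂lam) / p x := by
    have := norm_integral_le_of_norm_le (μ := lam)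
      (f := fun y => f y * min (q x y) (p y * q y x / p x))
      (g := fun y => cq / p x * (V y * p y)) (hVp.const_mul _) ?_
    · rw [Real.norm_eq_abs] at this
      refine this.trans (le_of_eq ?_)
      rw [integral_const_mul]
      ring
    · refine Filter.Eventually.of_forall fun y => ?_
      have hVy : 0 ≤ V y := le_trans zero_le_one (hV1 y)
      rw [Real.norm_eq_abs, abs_mul, abs_of_nonneg (hann y)]
      calc |f y| * min (q x y) (p y * q y x / p x)
          ≤ V y * min (q x y) (p y * q y x / p x) :=
            mul_le_mul_of_nonneg_right (hf y) (hann y)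
        _ ≤ cq / p x * (V y * p y) := mh_Va_le hV1 hqpos hcq hppos x y
  have h2 : |f x * (1 - ∫ y, min (q x y) (p y * q y x / p x) ∂lam)| ≤ V x := by
    rw [abs_mul]
    calc |f x| * |1 - ∫ y, min (q x y) (p y * q y x / p x) ∂lam|
        ≤ V x * 1 := by
          apply mul_le_mul (hf x) ?_ (abs_nonneg _) (le_trans zero_le_one (hV1 x))
          rw [abs_le]; constructor <;> linarith
      _ = V x := mul_one _
  exact (abs_add_le _ _).trans (add_le_add h1 h2)

end mhHelpers

section mhHelpers2
variable {X : Type*} [MeasurableSpace X] (lam : Measure X) [SigmaFinite lam]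
  {V f : X → ℝ} {q : X → X → ℝ} {pμ pν : X → ℝ} {cq : ℝ}
  (hVm : Measurable V) (hV1 : ∀ x, 1 ≤ V x) (hfm : Measurable f)
  (hf : ∀ x, |f x| ≤ V x) (hqm : Measurable (Function.uncurry q))
  (hqpos : ∀ x y, 0 < q x y) (hcq : ∀ x y, q x y ≤ cq)
  (hqint : ∀ x, ∫ y, q x y ∂lam = 1)
  (hpμm : Measurable pμ) (hpμpos : ∀ z, 0 < pμ z)
  (hpνm : Measurable pν) (hpνpos : ∀ z, 0 < pν z)
  (hVμ : Integrable (fun z => V z * pμ z) lam)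
  (hVν : Integrable (fun z => V z * pν z) lam)

omit [SigmaFinite lam] in
include hVm hV1 hqm hqpos hcq hqint hpμm hpμpos hpνm hpνpos hVμ hVν in
lemma mh_diffdom_int (x : X) :
    Integrable (fun y => (V x + V y) * |min (q x y) (pμ y * q y x / pμ x)
      - min (q x y) (pν y * q y x / pν x)|) lam := by
  have haμnn : ∀ y, 0 ≤ min (q x y) (pμ y * q y x / pμ x) := fun y => le_min (hqpos x y).le
    (div_nonneg (mul_nonneg (hpμpos y).le (hqpos y x).le) (hpμpos x).le)
  have haνnn : ∀ y, 0 ≤ min (q x y) (pν y * q y x / pν x) := fun y => le_min (hqpos x y).le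
    (div_nonneg (mul_nonneg (hpνpos y).le (hqpos y x).le) (hpνpos x).le)
  have hVx : 0 ≤ V x := le_trans zero_le_one (hV1 x)
  apply Integrable.mono'
    (g := fun y => 2 * V x * q x y + (cq / pμ x * (V y * pμ y) + cq / pν x * (V y * pν y)))
    (((mh_q_integrable lam q hqint x).const_mul (2 * V x)).add
      ((hVμ.const_mul _).add (hVν.const_mul _)))
    (((measurable_const.add hVm).mul
      ((mh_a_meas hqm hpμm x).sub (mh_a_meas hqm hpνm x)).abs).aestronglyMeasurable)
  refine Filter.Eventually.of_forall fun y => ?_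
  have hVy : 0 ≤ V y := le_trans zero_le_one (hV1 y)
  simp only [Pi.add_apply, Pi.mul_apply, Pi.sub_apply]
  rw [Real.norm_eq_abs, abs_of_nonneg (mul_nonneg (by linarith) (abs_nonneg _))]
  calc (V x + V y) * |min (q x y) (pμ y * q y x / pμ x) - min (q x y) (pν y * q y x / pν x)|
      ≤ (V x + V y) * (min (q x y) (pμ y * q y x / pμ x) + min (q x y) (pν y * q y x / pν x)) := by
        apply mul_le_mul_of_nonneg_left ?_ (by linarith)
        exact (abs_sub _ _).trans (by
          rw [abs_of_nonneg (haμnn y), abs_of_nonneg (haνnn y)])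
    _ = V x * min (q x y) (pμ y * q y x / pμ x) + V x * min (q x y) (pν y * q y x / pν x)
          + (V y * min (q x y) (pμ y * q y x / pμ x)
            + V y * min (q x y) (pν y * q y x / pν x)) := by ring
    _ ≤ 2 * V x * q x y + (cq / pμ x * (V y * pμ y) + cq / pν x * (V y * pν y)) := by
        have h1 : V x * min (q x y) (pμ y * q y x / pμ x) ≤ V x * q x y :=
          mul_le_mul_of_nonneg_left (min_le_left _ _) hVx
        have h2 : V x * min (q x y) (pν y * q y x / pν x) ≤ V x * q x y :=
          mul_le_mul_of_nonneg_left (min_le_left _ _) hVx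
        have h3 := mh_Va_le (q := q) (p := pμ) (cq := cq) hV1 hqpos hcq hpμpos x y
        have h4 := mh_Va_le (q := q) (p := pν) (cq := cq) hV1 hqpos hcq hpνpos x y
        linarith

omit [SigmaFinite lam] in
include hVm hV1 hfm hf hqm hqpos hcq hqint hpμm hpμpos hpνm hpνpos hVμ hVν in
lemma mh_kernel_diff_abs_le (x : X) :
    |mhKernelFun lam q pμ x f - mhKernelFun lam q pν x f|
      ≤ ∫ y, (V x + V y) * |min (q x y) (pμ y * q y x / pμ x)
          - min (q x y) (pν y * q y x / pν x)| ∂lam := by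
  set aμ : X → ℝ := fun y => min (q x y) (pμ y * q y x / pμ x) with haμ
  set aν : X → ℝ := fun y => min (q x y) (pν y * q y x / pν x) with haν
  have hAμ : Integrable (fun y => f y * aμ y) lam :=
    mh_fa_int lam hV1 hfm hf hqm hqpos hcq hpμm hpμpos hVμ x
  have hAν : Integrable (fun y => f y * aν y) lam :=
    mh_fa_int lam hV1 hfm hf hqm hqpos hcq hpνm hpνpos hVν x
  have haμint : Integrable aμ lam := mh_a_int lam hqm hqpos hqint hpμm hpμpos x
  have haνint : Integrable aν lam := mh_a_int lam hqm hqpos hqint hpνm hpνpos x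
  have hdiff : mhKernelFun lam q pμ x f - mhKernelFun lam q pν x f
      = ∫ y, (f y - f x) * (aμ y - aν y) ∂lam := by
    have e : ∀ y, (f y - f x) * (aμ y - aν y)
        = (f y * aμ y - f y * aν y) - (f x * aμ y - f x * aν y) := fun y => by ring
    rw [mh_repr lam f q pμ hqpos x, mh_repr lam f q pν hqpos x]
    simp_rw [e]
    have I1 : Integrable (fun y => f y * aμ y - f y * aν y) lam := hAμ.sub hAν
    have I3 : Integrable (fun y => f x * aμ y) lam := haμint.const_mul (f x)
    have I4 : Integrable (fun y => f x * aν y) lam := haνint.const_mul (f x)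
    have I2 : Integrable (fun y => f x * aμ y - f x * aν y) lam := I3.sub I4
    rw [integral_sub I1 I2, integral_sub hAμ hAν, integral_sub I3 I4,
      integral_const_mul, integral_const_mul]
    ring
  rw [hdiff]
  have hgint : Integrable (fun y => (V x + V y) * |aμ y - aν y|) lam := by
    have := mh_diffdom_int lam hVm hV1 hqm hqpos hcq hqint hpμm hpμpos hpνm hpνpos hVμ hVν x
    exact this
  have hb := norm_integral_le_of_norm_le (f := fun y => (f y - f x) * (aμ y - aν y)) hgint
    (Filter.Eventually.of_forall fun y => by
      rw [Real.norm_eq_abs, abs_mul]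
      apply mul_le_mul_of_nonneg_right ?_ (abs_nonneg _)
      calc |f y - f x| ≤ |f y| + |f x| := abs_sub _ _
        _ ≤ V x + V y := by have := hf x; have := hf y; linarith)
  rw [Real.norm_eq_abs] at hb
  exact hb

omit [SigmaFinite lam] in
lemma mh_abs_min_sub_mul (c s rμ rν : ℝ) (hs : 0 ≤ s) :
    |min c (rμ * s) - min c (rν * s)| ≤ s * |rν - rμ| := by
  refine (abs_min_sub_min_le_max c (rμ*s) c (rν*s)).trans ?_
  rw [sub_self, abs_zero]
  rw [max_eq_right (abs_nonneg _)]
  rw [← sub_mul, abs_mul, abs_of_nonneg hs, abs_sub_comm]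
  exact le_of_eq (mul_comm _ _)

end mhHelpers2
end mhAux

/-- **Lipschitz (mean value) inequality for Metropolis–Hastings kernels (density case):**
for every measurable `f` with `‖f‖_V ≤ 1`,
`|P_μ(ρ,f) - P_ν(ρ,f)| ≤ M_ρ ‖μ - ν‖_V`, where
`M_ρ = ∫_0^1 { ∫ sup_y [(V(y)+V(z)) (pρ(z)/p_t(z)) q(y,z) / V(y)] λ(dz)
  + ∫ sup_y [(V(y)+V(z)) p_t(z) q(z,y) pρ(y) / (p_t(y)² V(y))] λ(dz) } dt`,
with `p_t = (1-t) pμ + t pν`. -/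
theorem stmt_10 {X : Type*} [MeasurableSpace X]
    (lam : Measure X) [SigmaFinite lam]
    (V : X → ℝ) (hVm : Measurable V) (hV1 : ∀ x, 1 ≤ V x)
    (q : X → X → ℝ) (hqm : Measurable (Function.uncurry q))
    (hqpos : ∀ x y, 0 < q x y) (hqb : ∃ c, ∀ x y, q x y ≤ c)
    (hqint : ∀ x, ∫ y, q x y ∂lam = 1)
    (pμ pν : X → ℝ) (hpμm : Measurable pμ) (hpνm : Measurable pν)
    (hpμpos : ∀ x, 0 < pμ x) (hpνpos : ∀ x, 0 < pν x)
    (hpμb : ∃ c, ∀ x, pμ x ≤ c) (hpνb : ∃ c, ∀ x, pν x ≤ c)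
    (hμprob : IsProbabilityMeasure (lam.withDensity fun x => ENNReal.ofReal (pμ x)))
    (hνprob : IsProbabilityMeasure (lam.withDensity fun x => ENNReal.ofReal (pν x)))
    (hVμ : Integrable (fun x => V x * pμ x) lam)
    (hVν : Integrable (fun x => V x * pν x) lam)
    (pρ : X → ℝ) (hpρm : Measurable pρ) (hpρ0 : ∀ x, 0 ≤ pρ x)
    (hρprob : IsProbabilityMeasure (lam.withDensity fun x => ENNReal.ofReal (pρ x)))
    (hρμ : ∃ c, ∀ x, pρ x ≤ c * pμ x ^ 2)
    (hρν : ∃ c, ∀ x, pρ x ≤ c * pν x ^ 2) :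
    ∀ f : X → ℝ, Measurable f → (∀ x, |f x| ≤ V x) →
      ENNReal.ofReal
          |(∫ x, mhKernelFun lam q pμ x f
              ∂(lam.withDensity fun x => ENNReal.ofReal (pρ x)))
            - ∫ x, mhKernelFun lam q pν x f
                ∂(lam.withDensity fun x => ENNReal.ofReal (pρ x))|
        ≤ (∫⁻ t in Set.Icc (0 : ℝ) 1,
              ((∫⁻ z, ⨆ y, ENNReal.ofReal
                  ((V y + V z) * (pρ z / ((1 - t) * pμ z + t * pν z)) * q y z / V y)
                ∂lam)
              + ∫⁻ z, ⨆ y, ENNReal.ofReal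
                  ((V y + V z) * ((1 - t) * pμ z + t * pν z) * q z y * pρ y /
                    (((1 - t) * pμ y + t * pν y) ^ 2 * V y))
                ∂lam))
          * vDistE V (lam.withDensity fun x => ENNReal.ofReal (pμ x))
              (lam.withDensity fun x => ENNReal.ofReal (pν x)) := by
  intro f hfm hf
  obtain ⟨cq0, hcq0⟩ := hqb
  obtain ⟨cμ0, hcμ0⟩ := hpμb
  obtain ⟨cν0, hcν0⟩ := hpνb
  obtain ⟨cρμ0, hcρμ0⟩ := hρμ
  obtain ⟨cρν0, hcρν0⟩ := hρν
  have hcq : ∀ x y, q x y ≤ |cq0| := fun x y => (hcq0 x y).trans (le_abs_self _)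
  have hcμ : ∀ x, pμ x ≤ |cμ0| := fun x => (hcμ0 x).trans (le_abs_self _)
  have hcν : ∀ x, pν x ≤ |cν0| := fun x => (hcν0 x).trans (le_abs_self _)
  have hρμ' : ∀ x, pρ x ≤ |cρμ0| * pμ x ^ 2 := fun x => (hcρμ0 x).trans
    (mul_le_mul_of_nonneg_right (le_abs_self _) (sq_nonneg _))
  have hρν' : ∀ x, pρ x ≤ |cρν0| * pν x ^ 2 := fun x => (hcρν0 x).trans
    (mul_le_mul_of_nonneg_right (le_abs_self _) (sq_nonneg _))
  have hpρE : Measurable (fun x => ENNReal.ofReal (pρ x)) := hpρm.ennreal_ofReal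
  have hμ0 : ∀ z, 0 ≤ pμ z := fun z => (hpμpos z).le
  have hν0 : ∀ z, 0 ≤ pν z := fun z => (hpνpos z).le
  have hV0 : ∀ z, 0 ≤ V z := fun z => le_trans zero_le_one (hV1 z)
  have hpμint : Integrable pμ lam := hVμ.mono' hpμm.aestronglyMeasurable
    (Filter.Eventually.of_forall fun x => by
      rw [Real.norm_eq_abs, abs_of_nonneg (hμ0 x)]
      nlinarith [hV1 x, hμ0 x])
  have hpνint : Integrable pν lam := hVν.mono' hpνm.aestronglyMeasurable
    (Filter.Eventually.of_forall fun x => by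
      rw [Real.norm_eq_abs, abs_of_nonneg (hν0 x)]
      nlinarith [hV1 x, hν0 x])
  -- integrability of the MH kernels against ρ
  have hmhint : ∀ (p : X → ℝ) (c2 c3 : ℝ), Measurable p → (∀ z, 0 < p z) →
      Integrable (fun z => V z * p z) lam → Integrable p lam →
      (∀ x, pρ x ≤ c2 * p x ^ 2) → (∀ x, p x ≤ c3) → 0 ≤ c2 →
      Integrable (fun x => mhKernelFun lam q p x f)
        (lam.withDensity fun x => ENNReal.ofReal (pρ x)) := by
    intro p c2 c3 hpm hppos hVp hpint hb2 hb3 hc2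
    rw [integrable_withDensity_iff hpρE (Filter.Eventually.of_forall fun x => ofReal_lt_top)]
    have hIV0 : 0 ≤ ∫ z, V z * p z ∂lam :=
      integral_nonneg fun z => mul_nonneg (hV0 z) (hppos z).le
    apply Integrable.mono'
      (g := fun x => (|cq0| * (∫ z, V z * p z ∂lam) * c2) * p x + (c2 * c3) * (V x * p x))
      ((hpint.const_mul _).add (hVp.const_mul _))
      (((mh_meas lam hfm hqm hpm).mul hpρE.ennreal_toReal).aestronglyMeasurable)
    refine Filter.Eventually.of_forall fun x => ?_
    simp only [Pi.mul_apply]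
    rw [Real.norm_eq_abs, ENNReal.toReal_ofReal (hpρ0 x), abs_mul, abs_of_nonneg (hpρ0 x)]
    have h1 := mh_abs_le lam hV1 hfm hf hqm hqpos hcq hqint hpm hppos hVp x
    refine (mul_le_mul_of_nonneg_right h1 (hpρ0 x)).trans ?_
    have hd : pρ x / p x ≤ c2 * p x := (div_le_iff₀ (hppos x)).2 (by nlinarith [hb2 x])
    have hterm1 : |cq0| * (∫ z, V z * p z ∂lam) / p x * pρ x
        ≤ |cq0| * (∫ z, V z * p z ∂lam) * c2 * p x := by
      have e : |cq0| * (∫ z, V z * p z ∂lam) / p x * pρ x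
          = (|cq0| * (∫ z, V z * p z ∂lam)) * (pρ x / p x) := by ring
      rw [e]
      calc (|cq0| * (∫ z, V z * p z ∂lam)) * (pρ x / p x)
          ≤ (|cq0| * (∫ z, V z * p z ∂lam)) * (c2 * p x) :=
            mul_le_mul_of_nonneg_left hd (mul_nonneg (abs_nonneg _) hIV0)
        _ = |cq0| * (∫ z, V z * p z ∂lam) * c2 * p x := by ring
    have hterm2 : V x * pρ x ≤ (c2 * c3) * (V x * p x) := by
      have hpp : pρ x ≤ c2 * c3 * p x := by
        nlinarith [mul_le_mul_of_nonneg_left (hb3 x) (mul_nonneg hc2 (hppos x).le), hb2 x]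
      calc V x * pρ x ≤ V x * (c2 * c3 * p x) := mul_le_mul_of_nonneg_left hpp (hV0 x)
        _ = (c2 * c3) * (V x * p x) := by ring
    rw [add_mul]
    exact add_le_add hterm1 hterm2
  have hintμ : Integrable (fun x => mhKernelFun lam q pμ x f)
      (lam.withDensity fun x => ENNReal.ofReal (pρ x)) :=
    hmhint pμ |cρμ0| |cμ0| hpμm hpμpos hVμ hpμint hρμ' hcμ (abs_nonneg _)
  have hintν : Integrable (fun x => mhKernelFun lam q pν x f)
      (lam.withDensity fun x => ENNReal.ofReal (pρ x)) :=
    hmhint pν |cρν0| |cν0| hpνm hpνpos hVν hpνint hρν' hcν (abs_nonneg _)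
  -- abbreviations
  set μm := lam.withDensity fun x => ENNReal.ofReal (pμ x) with hμmdef
  set νm := lam.withDensity fun x => ENNReal.ofReal (pν x) with hνmdef
  set ρm := lam.withDensity fun x => ENNReal.ofReal (pρ x) with hρmdef
  have hGm_pair : Measurable (fun xy : X × X => ENNReal.ofReal ((V xy.1 + V xy.2) *
      |min (q xy.1 xy.2) (pμ xy.2 * q xy.2 xy.1 / pμ xy.1)
        - min (q xy.1 xy.2) (pν xy.2 * q xy.2 xy.1 / pν xy.1)|)) :=
    (((hVm.comp measurable_fst).add (hVm.comp measurable_snd)).mul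
      ((mh_a_meas_pair hqm hpμm).sub (mh_a_meas_pair hqm hpνm)).abs).ennreal_ofReal
  set G : X → ℝ≥0∞ := fun x => ∫⁻ y, ENNReal.ofReal ((V x + V y) *
      |min (q x y) (pμ y * q y x / pμ x) - min (q x y) (pν y * q y x / pν x)|) ∂lam
    with hGdef
  have hGm : Measurable G := hGm_pair.lintegral_prod_right'
  -- the V-weighted total variation quantity
  set w : X → ℝ≥0∞ := fun z => ENNReal.ofReal (V z * |pν z - pμ z|) with hwdef
  have hwm : Measurable w := (hVm.mul (hpνm.sub hpμm).abs).ennreal_ofReal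
  have hcRint : Integrable (fun z => V z * |pν z - pμ z|) lam := by
    apply (hVμ.add hVν).mono' (hVm.mul (hpνm.sub hpμm).abs).aestronglyMeasurable
    refine Filter.Eventually.of_forall fun z => ?_
    simp only [Pi.mul_apply, Pi.sub_apply]
    rw [Real.norm_eq_abs, abs_of_nonneg (mul_nonneg (hV0 z) (abs_nonneg _))]
    have h1 : |pν z - pμ z| ≤ pμ z + pν z := by
      refine (abs_sub _ _).trans ?_
      rw [abs_of_nonneg (hν0 z), abs_of_nonneg (hμ0 z)]
      linarith
    simp only [Pi.add_apply]
    nlinarith [mul_le_mul_of_nonneg_left h1 (hV0 z)]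
  have hcR0 : 0 ≤ ∫ z, V z * |pν z - pμ z| ∂lam :=
    integral_nonneg fun z => mul_nonneg (hV0 z) (abs_nonneg _)
  have hcR_eq : ∫⁻ z, w z ∂lam = ENNReal.ofReal (∫ z, V z * |pν z - pμ z| ∂lam) :=
    (ofReal_integral_eq_lintegral_ofReal hcRint
      (Filter.Eventually.of_forall fun z => mul_nonneg (hV0 z) (abs_nonneg _))).symm
  have hcfin : (∫⁻ z, w z ∂lam) ≠ ⊤ := by rw [hcR_eq]; exact ofReal_ne_top
  -- the quantity is dominated by the V-distance
  set f0 : X → ℝ := fun z => if pν z ≤ pμ z then V z else -V z with hf0def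
  have hf0m : Measurable f0 := Measurable.ite (measurableSet_le hpνm hpμm) hVm hVm.neg
  have hf0b : ∀ z, |f0 z| ≤ V z := by
    intro z
    rw [hf0def]
    by_cases h : pν z ≤ pμ z
    · simp only [if_pos h]; rw [abs_of_nonneg (hV0 z)]
    · simp only [if_neg h]; rw [abs_neg, abs_of_nonneg (hV0 z)]
  have hμf0int : Integrable (fun z => pμ z * f0 z) lam := by
    apply hVμ.mono' (hpμm.mul hf0m).aestronglyMeasurable
    refine Filter.Eventually.of_forall fun z => ?_
    simp only [Pi.mul_apply]
    rw [Real.norm_eq_abs, abs_mul, abs_of_nonneg (hμ0 z)]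
    calc pμ z * |f0 z| ≤ pμ z * V z := mul_le_mul_of_nonneg_left (hf0b z) (hμ0 z)
      _ = V z * pμ z := mul_comm _ _
  have hνf0int : Integrable (fun z => pν z * f0 z) lam := by
    apply hVν.mono' (hpνm.mul hf0m).aestronglyMeasurable
    refine Filter.Eventually.of_forall fun z => ?_
    simp only [Pi.mul_apply]
    rw [Real.norm_eq_abs, abs_mul, abs_of_nonneg (hν0 z)]
    calc pν z * |f0 z| ≤ pν z * V z := mul_le_mul_of_nonneg_left (hf0b z) (hν0 z)
      _ = V z * pν z := mul_comm _ _
  have hint1 : ∫ z, f0 z ∂μm = ∫ z, pμ z * f0 z ∂lam := by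
    rw [hμmdef]
    rw [show (fun x => ENNReal.ofReal (pμ x)) = (fun x => ((pμ x).toNNReal : ℝ≥0∞)) from rfl]
    rw [integral_withDensity_eq_integral_smul hpμm.real_toNNReal]
    refine integral_congr_ae (Filter.Eventually.of_forall fun z => ?_)
    show ((pμ z).toNNReal : ℝ≥0) • f0 z = pμ z * f0 z
    rw [NNReal.smul_def, smul_eq_mul, Real.coe_toNNReal _ (hμ0 z)]
  have hint2 : ∫ z, f0 z ∂νm = ∫ z, pν z * f0 z ∂lam := by
    rw [hνmdef]
    rw [show (fun x => ENNReal.ofReal (pν x)) = (fun x => ((pν x).toNNReal : ℝ≥0∞)) from rfl]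
    rw [integral_withDensity_eq_integral_smul hpνm.real_toNNReal]
    refine integral_congr_ae (Filter.Eventually.of_forall fun z => ?_)
    show ((pν z).toNNReal : ℝ≥0) • f0 z = pν z * f0 z
    rw [NNReal.smul_def, smul_eq_mul, Real.coe_toNNReal _ (hν0 z)]
  have hsub : (∫ z, f0 z ∂μm) - ∫ z, f0 z ∂νm = ∫ z, V z * |pν z - pμ z| ∂lam := by
    rw [hint1, hint2, ← integral_sub hμf0int hνf0int]
    refine integral_congr_ae (Filter.Eventually.of_forall fun z => ?_)
    rw [hf0def]
    by_cases h : pν z ≤ pμ z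
    · simp only [if_pos h]; rw [abs_of_nonpos (by linarith : pν z - pμ z ≤ 0)]; ring
    · simp only [if_neg h]
      rw [abs_of_pos (by linarith [lt_of_not_ge h] : 0 < pν z - pμ z)]; ring
  have hcle : ENNReal.ofReal (∫ z, V z * |pν z - pμ z| ∂lam) ≤ vDistE V μm νm := by
    have e : ENNReal.ofReal (∫ z, V z * |pν z - pμ z| ∂lam)
        = ENNReal.ofReal |(∫ z, f0 z ∂μm) - ∫ z, f0 z ∂νm| := by
      rw [hsub, abs_of_nonneg hcR0]
    rw [e]
    unfold vDistE
    exact le_iSup (fun (g : {g : X → ℝ // Measurable g ∧ ∀ x, |g x| ≤ V x}) =>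
      ENNReal.ofReal |(∫ x, g.1 x ∂μm) - ∫ x, g.1 x ∂νm|) ⟨f0, hf0m, hf0b⟩
  -- master measurability for the Fubini step
  have hoKm : Measurable (fun pr : (X × X) × ℝ =>
      ENNReal.ofReal (pρ pr.1.1 * ((V pr.1.1 + V pr.1.2) * q pr.1.2 pr.1.1) *
        (|pν pr.1.2 - pμ pr.1.2| / ((1-pr.2)*pμ pr.1.1 + pr.2*pν pr.1.1)
          + ((1-pr.2)*pμ pr.1.2 + pr.2*pν pr.1.2) * |pν pr.1.1 - pμ pr.1.1| /
            ((1-pr.2)*pμ pr.1.1 + pr.2*pν pr.1.1)^2))) := by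
    have mx : Measurable fun pr : (X × X) × ℝ => pr.1.1 := measurable_fst.fst
    have my : Measurable fun pr : (X × X) × ℝ => pr.1.2 := measurable_fst.snd
    have mt : Measurable fun pr : (X × X) × ℝ => pr.2 := measurable_snd
    have hden : Measurable fun pr : (X × X) × ℝ =>
        (1-pr.2)*pμ pr.1.1 + pr.2*pν pr.1.1 :=
      ((measurable_const.sub mt).mul (hpμm.comp mx)).add (mt.mul (hpνm.comp mx))
    have hnum2 : Measurable fun pr : (X × X) × ℝ =>
        (1-pr.2)*pμ pr.1.2 + pr.2*pν pr.1.2 :=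
      ((measurable_const.sub mt).mul (hpμm.comp my)).add (mt.mul (hpνm.comp my))
    apply Measurable.ennreal_ofReal
    apply Measurable.mul
    · exact (hpρm.comp mx).mul (((hVm.comp mx).add (hVm.comp my)).mul
        (hqm.comp (my.prodMk mx)))
    · exact (((hpνm.comp my).sub (hpμm.comp my)).abs.div hden).add
        ((hnum2.mul ((hpνm.comp mx).sub (hpμm.comp mx)).abs).div (hden.pow_const 2))
  -- pointwise bound in (x, y)
  have hxy : ∀ x y, ENNReal.ofReal (pρ x) * ENNReal.ofReal ((V x + V y) *
        |min (q x y) (pμ y * q y x / pμ x) - min (q x y) (pν y * q y x / pν x)|)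
      ≤ ∫⁻ t in Set.Icc (0:ℝ) 1,
          ENNReal.ofReal (pρ x * ((V x + V y) * q y x) *
            (|pν y - pμ y| / ((1-t)*pμ x + t*pν x)
              + ((1-t)*pμ y + t*pν y) * |pν x - pμ x| / ((1-t)*pμ x + t*pν x)^2)) := by
    intro x y
    have hmins : |min (q x y) (pμ y * q y x / pμ x) - min (q x y) (pν y * q y x / pν x)|
        ≤ q y x * |pν y / pν x - pμ y / pμ x| := by
      have e1 : pμ y * q y x / pμ x = (pμ y / pμ x) * q y x := by ring
      have e2 : pν y * q y x / pν x = (pν y / pν x) * q y x := by ring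
      rw [e1, e2]
      exact mh_abs_min_sub_mul (q x y) (q y x) _ _ (hqpos y x).le
    rw [← ofReal_mul (hpρ0 x)]
    refine le_trans (ofReal_le_ofReal ?_) (mh_key_ofReal (pρ x * ((V x + V y) * q y x))
      (pμ x) (pμ y) (pν x) (pν y)
      (mul_nonneg (hpρ0 x) (mul_nonneg (add_nonneg (hV0 x) (hV0 y)) (hqpos y x).le))
      (hpμpos x) (hpνpos x) (hμ0 y) (hν0 y))
    calc pρ x * ((V x + V y) * |min (q x y) (pμ y * q y x / pμ x)
            - min (q x y) (pν y * q y x / pν x)|)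
        = (pρ x * (V x + V y)) * |min (q x y) (pμ y * q y x / pμ x)
            - min (q x y) (pν y * q y x / pν x)| := by ring
      _ ≤ (pρ x * (V x + V y)) * (q y x * |pν y / pν x - pμ y / pμ x|) :=
          mul_le_mul_of_nonneg_left hmins
            (mul_nonneg (hpρ0 x) (add_nonneg (hV0 x) (hV0 y)))
      _ = pρ x * ((V x + V y) * q y x) * |pν y / pν x - pμ y / pμ x| := by ring
  -- the main chain
  calc ENNReal.ofReal
        |(∫ x, mhKernelFun lam q pμ x f ∂ρm) - ∫ x, mhKernelFun lam q pν x f ∂ρm|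
      = ↑‖∫ x, (mhKernelFun lam q pμ x f - mhKernelFun lam q pν x f) ∂ρm‖₊ := by
        rw [← integral_sub hintμ hintν, ← Real.norm_eq_abs, ofReal_norm, enorm_eq_nnnorm]
    _ ≤ ∫⁻ x, ↑‖mhKernelFun lam q pμ x f - mhKernelFun lam q pν x f‖₊ ∂ρm :=
        enorm_integral_le_lintegral_enorm _
    _ ≤ ∫⁻ x, G x ∂ρm := by
        refine lintegral_mono fun x => ?_
        rw [← enorm_eq_nnnorm, ← ofReal_norm, Real.norm_eq_abs]
        refine (ofReal_le_ofReal (mh_kernel_diff_abs_le lam hVm hV1 hfm hf hqm hqpos hcq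
          hqint hpμm hpμpos hpνm hpνpos hVμ hVν x)).trans (le_of_eq ?_)
        rw [hGdef]
        exact ofReal_integral_eq_lintegral_ofReal
          (mh_diffdom_int lam hVm hV1 hqm hqpos hcq hqint hpμm hpμpos hpνm hpνpos hVμ hVν x)
          (Filter.Eventually.of_forall fun y =>
            mul_nonneg (add_nonneg (hV0 x) (hV0 y)) (abs_nonneg _))
    _ = ∫⁻ x, ENNReal.ofReal (pρ x) * G x ∂lam := by
        rw [hρmdef, lintegral_withDensity_eq_lintegral_mul lam hpρE hGm]
        exact lintegral_congr fun x => rfl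
    _ ≤ ∫⁻ x, ∫⁻ y, ∫⁻ t in Set.Icc (0:ℝ) 1,
          ENNReal.ofReal (pρ x * ((V x + V y) * q y x) *
            (|pν y - pμ y| / ((1-t)*pμ x + t*pν x)
              + ((1-t)*pμ y + t*pν y) * |pν x - pμ x| / ((1-t)*pμ x + t*pν x)^2))
            ∂(volume : Measure ℝ) ∂lam ∂lam := by
        refine lintegral_mono fun x => ?_
        have hw2 : Measurable (fun y => ENNReal.ofReal ((V x + V y) *
            |min (q x y) (pμ y * q y x / pμ x) - min (q x y) (pν y * q y x / pν x)|)) :=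
          hGm_pair.comp measurable_prodMk_left
        rw [hGdef, ← lintegral_const_mul _ hw2]
        exact lintegral_mono fun y => hxy x y
    _ = ∫⁻ t in Set.Icc (0:ℝ) 1, ∫⁻ x, ∫⁻ y,
          ENNReal.ofReal (pρ x * ((V x + V y) * q y x) *
            (|pν y - pμ y| / ((1-t)*pμ x + t*pν x)
              + ((1-t)*pμ y + t*pν y) * |pν x - pμ x| / ((1-t)*pμ x + t*pν x)^2))
            ∂lam ∂lam ∂(volume : Measure ℝ) := by
        have h1 : ∀ x, (∫⁻ y, ∫⁻ t in Set.Icc (0:ℝ) 1,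
            ENNReal.ofReal (pρ x * ((V x + V y) * q y x) *
              (|pν y - pμ y| / ((1-t)*pμ x + t*pν x)
                + ((1-t)*pμ y + t*pν y) * |pν x - pμ x| / ((1-t)*pμ x + t*pν x)^2))
              ∂(volume : Measure ℝ) ∂lam)
            = ∫⁻ t in Set.Icc (0:ℝ) 1, ∫⁻ y,
            ENNReal.ofReal (pρ x * ((V x + V y) * q y x) *
              (|pν y - pμ y| / ((1-t)*pμ x + t*pν x)
                + ((1-t)*pμ y + t*pν y) * |pν x - pμ x| / ((1-t)*pμ x + t*pν x)^2))
              ∂lam ∂(volume : Measure ℝ) := by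
          intro x
          exact lintegral_lintegral_swap ((hoKm.comp
            (((measurable_const.prodMk measurable_fst)).prodMk measurable_snd)).aemeasurable)
        rw [lintegral_congr h1]
        exact lintegral_lintegral_swap ((Measurable.lintegral_prod_right'
          (f := fun pr : (X × ℝ) × X =>
            ENNReal.ofReal (pρ pr.1.1 * ((V pr.1.1 + V pr.2) * q pr.2 pr.1.1) *
              (|pν pr.2 - pμ pr.2| / ((1-pr.1.2)*pμ pr.1.1 + pr.1.2*pν pr.1.1)
                + ((1-pr.1.2)*pμ pr.2 + pr.1.2*pν pr.2) * |pν pr.1.1 - pμ pr.1.1| /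
                  ((1-pr.1.2)*pμ pr.1.1 + pr.1.2*pν pr.1.1)^2)))
          (hoKm.comp (((measurable_fst.fst.prodMk measurable_snd)).prodMk
            measurable_fst.snd))).aemeasurable)
    _ ≤ ∫⁻ t in Set.Icc (0:ℝ) 1,
          (((∫⁻ z, ⨆ y, ENNReal.ofReal
              ((V y + V z) * (pρ z / ((1 - t) * pμ z + t * pν z)) * q y z / V y) ∂lam)
            + ∫⁻ z, ⨆ y, ENNReal.ofReal
              ((V y + V z) * ((1 - t) * pμ z + t * pν z) * q z y * pρ y /
                (((1 - t) * pμ y + t * pν y) ^ 2 * V y)) ∂lam)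
            * ENNReal.ofReal (∫ z, V z * |pν z - pμ z| ∂lam)) := by
        refine lintegral_mono_ae (((ae_restrict_mem measurableSet_Icc)).mono fun t ht => ?_)
        have hft := mh_fixed_t lam V hV1 q pμ pν pρ hwm hcfin t ht hμ0 hν0
          (fun a b => (hqpos a b).le) hpρ0
        rw [hcR_eq] at hft
        exact hft
    _ = (∫⁻ t in Set.Icc (0:ℝ) 1,
          ((∫⁻ z, ⨆ y, ENNReal.ofReal
              ((V y + V z) * (pρ z / ((1 - t) * pμ z + t * pν z)) * q y z / V y) ∂lam)
            + ∫⁻ z, ⨆ y, ENNReal.ofReal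
              ((V y + V z) * ((1 - t) * pμ z + t * pν z) * q z y * pρ y /
                (((1 - t) * pμ y + t * pν y) ^ 2 * V y)) ∂lam))
          * ENNReal.ofReal (∫ z, V z * |pν z - pμ z| ∂lam) :=
        lintegral_mul_const' _ _ ofReal_ne_top
    _ ≤ (∫⁻ t in Set.Icc (0:ℝ) 1,
          ((∫⁻ z, ⨆ y, ENNReal.ofReal
              ((V y + V z) * (pρ z / ((1 - t) * pμ z + t * pν z)) * q y z / V y) ∂lam)
            + ∫⁻ z, ⨆ y, ENNReal.ofReal
              ((V y + V z) * ((1 - t) * pμ z + t * pν z) * q z y * pρ y /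
                (((1 - t) * pμ y + t * pν y) ^ 2 * V y)) ∂lam))
          * vDistE V μm νm := mul_le_mul_right hcle _
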